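/- Let α > 1 and αβ² > γ², and set L = {β·(γ²/(αβ²))^k : k = 0,1,2,…}. If r ∈ [0,∞), r > 0, and either r ∉ L, or r ∈ L and b* ∉ L, then the iterates φⁿ(r) tend to +∞. -/

import Mathlib

open Filter

/-- The real map describing how `f(x) = a x ((x+b)/(x+c))²` transforms the p-adic
absolute value `|x|_p` when `α = |a|_p`, `β = |b|_p`, `γ = |c|_p` and `β < γ`. -/
noncomputable def phiMap (α β γ bs cs : ℝ) : ℝ → ℝ := fun r =>
  if r < β then α * β ^ 2 / γ ^ 2 * r
  else if r = β then bs
  else if r < γ then α / γ ^ 2 * r ^ 3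
  else if r = γ then cs
  else α * r

theorem phi_tendsto_atTop_of_alpha_gt_one_gt
    (α β γ bs cs : ℝ) (hα : 0 < α) (hβ : 0 < β) (hγ : 0 < γ)
    (hbs : 0 < bs) (hcs : 0 < cs) (hβγ : β < γ)
    (hbsle : bs ≤ α * β ^ 3 / γ ^ 2) (hcsge : α * γ ≤ cs)
    (hα1 : 1 < α) (hgt : γ ^ 2 < α * β ^ 2) (r : ℝ) (hr : 0 < r)
    (hrL : (¬ ∃ k : ℕ, r = β * (γ ^ 2 / (α * β ^ 2)) ^ k) ∨
      ((∃ k : ℕ, r = β * (γ ^ 2 / (α * β ^ 2)) ^ k) ∧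
        ¬ ∃ k : ℕ, bs = β * (γ ^ 2 / (α * β ^ 2)) ^ k)) :
    Tendsto (fun n => (phiMap α β γ bs cs)^[n] r) atTop atTop := by
  set φ := phiMap α β γ bs cs with hφ
  set c := α * β ^ 2 / γ ^ 2 with hcdef
  have hγ2 : (0:ℝ) < γ ^ 2 := by positivity
  have hc1 : 1 < c := (one_lt_div hγ2).2 hgt
  have hc0 : 0 < c := lt_trans one_pos hc1
  have hck : ∀ k : ℕ, (0:ℝ) < c ^ k := fun k => pow_pos hc0 k
  -- translation of membership in L
  have hq : γ ^ 2 / (α * β ^ 2) = c⁻¹ := by rw [hcdef, inv_div]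
  have hLiff : ∀ (s : ℝ) (k : ℕ), s = β * (γ ^ 2 / (α * β ^ 2)) ^ k ↔ c ^ k * s = β := by
    intro s k
    rw [hq, inv_pow, ← div_eq_mul_inv, eq_div_iff (hck k).ne', mul_comm]
  -- one step from above β
  have hstep : ∀ s, β < s → c * s ≤ φ s := by
    intro s hs
    have hs0 : 0 < s := hβ.trans hs
    simp only [hφ, phiMap]
    rw [if_neg (not_lt.2 hs.le), if_neg hs.ne']
    rcases lt_trichotomy s γ with h | h | h
    · rw [if_pos h]
      have hb2 : β ^ 2 ≤ s ^ 2 := by nlinarith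
      calc c * s = α / γ ^ 2 * (β ^ 2 * s) := by rw [hcdef]; ring
        _ ≤ α / γ ^ 2 * (s ^ 2 * s) := by
            have h1 : (0:ℝ) ≤ α / γ ^ 2 := by positivity
            exact mul_le_mul_of_nonneg_left (mul_le_mul_of_nonneg_right hb2 hs0.le) h1
        _ = α / γ ^ 2 * s ^ 3 := by ring
    · subst h
      rw [if_neg (lt_irrefl s), if_pos rfl]
      have hkey : α * (β * β) ≤ α * (s * s) :=
        mul_le_mul_of_nonneg_left (mul_self_le_mul_self hβ.le hβγ.le) hα.le
      have h1 : c * s = α * β ^ 2 / s := by rw [hcdef]; field_simp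
      have h2 : α * β ^ 2 / s ≤ α * s := by
        rw [div_le_iff₀ (hβ.trans hβγ)]; nlinarith
      linarith
    · rw [if_neg (not_lt.2 h.le), if_neg h.ne']
      have hcα : c ≤ α := by
        rw [hcdef, div_le_iff₀ hγ2]
        nlinarith [mul_le_mul_of_nonneg_left (mul_self_le_mul_self hβ.le hβγ.le) hα.le]
      exact mul_le_mul_of_nonneg_right hcα hs0.le
  have hstep' : ∀ s, β < s → β < φ s := by
    intro s hs
    have hs0 : 0 < s := hβ.trans hs
    have : s < c * s := by nlinarith
    linarith [hstep s hs]
  -- iterates from above β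
  have hiter : ∀ s, β < s → ∀ n, β < φ^[n] s ∧ c ^ n * s ≤ φ^[n] s := by
    intro s hs n
    induction n with
    | zero => simpa using hs
    | succ n ih =>
      obtain ⟨ih1, ih2⟩ := ih
      rw [Function.iterate_succ_apply']
      refine ⟨hstep' _ ih1, ?_⟩
      have h1 : c * (c ^ n * s) ≤ c * φ^[n] s := by
        exact mul_le_mul_of_nonneg_left ih2 hc0.le
      have h2 : c * φ^[n] s ≤ φ (φ^[n] s) := hstep _ ih1
      calc c ^ (n + 1) * s = c * (c ^ n * s) := by ring
        _ ≤ φ (φ^[n] s) := le_trans h1 h2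
  have hB : ∀ s, β < s → Tendsto (fun n => φ^[n] s) atTop atTop := by
    intro s hs
    have hs0 : 0 < s := hβ.trans hs
    refine tendsto_atTop_mono (fun n => (hiter s hs n).2) ?_
    exact (tendsto_pow_atTop_atTop_of_one_lt hc1).atTop_mul_const hs0
  -- small values
  have hsmall : ∀ s : ℝ, s < β → φ s = c * s := by
    intro s h
    simp only [hφ, phiMap, if_pos h, hcdef]
  -- main lemma
  have hM : ∀ s, 0 < s → (¬ ∃ k : ℕ, c ^ k * s = β) → Tendsto (fun n => φ^[n] s) atTop atTop := by
    intro s hs0 hsL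
    rcases lt_trichotomy s β with hlt | heq | hgt'
    · have hex : ∃ n, ¬ (c ^ n * s < β) := by
        have ht := (tendsto_pow_atTop_atTop_of_one_lt hc1).atTop_mul_const hs0
        obtain ⟨n, hn⟩ := (ht.eventually_ge_atTop β).exists
        exact ⟨n, not_lt.2 hn⟩
      set N := Nat.find hex with hN
      have hNs : ¬ (c ^ N * s < β) := Nat.find_spec hex
      have hlt' : ∀ k, k < N → c ^ k * s < β := by
        intro k hk
        have := Nat.find_min hex hk
        exact not_not.1 this
      have hiterlt : ∀ k, k ≤ N → φ^[k] s = c ^ k * s := by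
        intro k hk
        induction k with
        | zero => simp
        | succ k ih =>
          rw [Function.iterate_succ_apply', ih (Nat.le_of_succ_le hk),
            hsmall _ (hlt' k (Nat.lt_of_succ_le hk))]
          ring
      have hNgt : β < φ^[N] s := by
        rw [hiterlt N le_rfl]
        refine lt_of_le_of_ne (not_lt.1 hNs) ?_
        intro h
        exact hsL ⟨N, h.symm⟩
      have htb := hB _ hNgt
      have hsh : ∀ n, φ^[n + N] s = φ^[n] (φ^[N] s) := fun n =>
        Function.iterate_add_apply φ n N s
      have h3 : Tendsto (fun n => φ^[n + N] s) atTop atTop := by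
        simp only [hsh]; exact htb
      exact (tendsto_add_atTop_iff_nat N).1 h3
    · exact absurd ⟨0, by simpa using heq⟩ hsL
    · exact hB s hgt'
  -- conclude
  rcases hrL with h | ⟨⟨k, hk⟩, hbsL⟩
  · refine hM r hr ?_
    rintro ⟨k, hkk⟩
    exact h ⟨k, (hLiff r k).2 hkk⟩
  · have hck' : c ^ k * r = β := (hLiff r k).1 hk
    have hltk : ∀ j, j < k → c ^ j * r < β := by
      intro j hj
      have h1 : c ^ (k - j) * (c ^ j * r) = β := by
        rw [← mul_assoc, ← pow_add, Nat.sub_add_cancel hj.le, hck']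
      have h2 : 1 < c ^ (k - j) := one_lt_pow₀ hc1 (Nat.sub_ne_zero_of_lt hj)
      have h3 : 0 < c ^ j * r := by positivity
      nlinarith
    have hiterk : ∀ j, j ≤ k → φ^[j] r = c ^ j * r := by
      intro j hj
      induction j with
      | zero => simp
      | succ j ih =>
        rw [Function.iterate_succ_apply', ih (Nat.le_of_succ_le hj),
          hsmall _ (hltk j (Nat.lt_of_succ_le hj))]
        ring
    have hkβ : φ^[k] r = β := by rw [hiterk k le_rfl, hck']
    have hk1 : φ^[k + 1] r = bs := by
      rw [Function.iterate_succ_apply', hkβ]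
      simp [hφ, phiMap]
    have hbsL' : ¬ ∃ m : ℕ, c ^ m * bs = β := by
      rintro ⟨m, hm⟩
      exact hbsL ⟨m, (hLiff bs m).2 hm⟩
    have htb := hM bs hbs hbsL'
    have h3 : Tendsto (fun n => φ^[n + (k + 1)] r) atTop atTop := by
      have hsh : ∀ n, φ^[n + (k + 1)] r = φ^[n] bs := by
        intro n
        rw [Function.iterate_add_apply, hk1]
      simp only [hsh]; exact htb
    exact (tendsto_add_atTop_iff_nat (k + 1)).1 h3
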